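/- The column sum s_n = ∑_{i=0}^{n} a(i,n) of the trinomial transform triangle satisfies s_n = ∑_{ℓ=0}^{2n} S(n,ℓ)·a_ℓ. -/

import Mathlib

open Finset

/-- Trinomial coefficient: coefficient of x^i in (1+x+x^2)^n, zero for i<0. -/
def T (n : ℕ) (i : ℤ) : ℕ :=
  if 0 ≤ i then ∑ j ∈ Finset.range (i.toNat + 1), n.choose j * j.choose (i.toNat - j) else 0

/-- Partial sum trinomial coefficient. -/
def S (n : ℕ) (k : ℤ) : ℕ :=
  ∑ j ∈ Finset.range (n + 1), T (n - j) (k - j)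

open Polynomial

open Finset Polynomial

noncomputable def p : Polynomial ℕ := 1 + X + X^2

lemma c_eq (n m : ℕ) : (p^n).coeff m = ∑ j ∈ range (m+1), n.choose j * j.choose (m-j) := by
  have hp : p = (X * (1+X)) + 1 := by rw [p]; ring
  have h1 : (p^n) = ∑ k ∈ range (n+1), X^k * (1+X)^k * C (n.choose k) := by
    rw [hp, add_pow]
    refine Finset.sum_congr rfl fun k _ => ?_
    rw [mul_pow, one_pow, mul_one]
    simp
  have h2 : (p^n).coeff m = ∑ k ∈ range (n+1),
      (if k ≤ m then n.choose k * k.choose (m-k) else 0) := by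
    rw [h1, Polynomial.finset_sum_coeff]
    refine Finset.sum_congr rfl fun k _ => ?_
    rw [coeff_mul_C, coeff_X_pow_mul', coeff_one_add_X_pow]
    split_ifs with h <;> simp [mul_comm]
  rw [h2]
  rw [Finset.sum_subset (Finset.range_subset_range.2 (by omega : n+1 ≤ n+m+1))
    (fun k hk hk2 => by
      simp only [Finset.mem_range] at hk hk2
      simp [Nat.choose_eq_zero_of_lt (by omega : n < k)])]
  rw [← Finset.sum_subset (Finset.range_subset_range.2 (by omega : m+1 ≤ n+m+1))
    (fun k hk hk2 => by
      simp only [Finset.mem_range] at hk hk2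
      simp [Nat.not_le.2 (by omega : m < k)])]
  refine Finset.sum_congr rfl fun k hk => ?_
  rw [if_pos (by simp at hk; omega)]
lemma T_eq (n m : ℕ) : T n (m:ℤ) = (p^n).coeff m := by
  rw [T, if_pos (by positivity), c_eq]; simp

lemma T_neg (n : ℕ) {i : ℤ} (h : i < 0) : T n i = 0 := by
  rw [T, if_neg (by omega)]

lemma coeff_big (n m : ℕ) (h : 2*n < m) : (p^n).coeff m = 0 := by
  apply Polynomial.coeff_eq_zero_of_natDegree_lt
  calc (p^n).natDegree ≤ n * p.natDegree := Polynomial.natDegree_pow_le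
    _ ≤ n * 2 := by
        apply Nat.mul_le_mul_left
        rw [p]; compute_degree
    _ < m := by omega

lemma T_big (n : ℕ) {i : ℤ} (h : 2*n < i) : T n i = 0 := by
  have h0 : 0 ≤ i := by omega
  obtain ⟨m, rfl⟩ := Int.eq_ofNat_of_zero_le h0
  rw [T_eq, coeff_big]
  omega

lemma T_rec (n : ℕ) (i : ℤ) : T (n+1) i = T n i + T n (i-1) + T n (i-2) := by
  rcases lt_or_ge i 0 with h | h
  · rw [T_neg _ h, T_neg _ (by omega), T_neg _ (by omega), T_neg _ (by omega)]
  rcases lt_or_ge i 2 with h2 | h2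
  · interval_cases i
    · show T (n+1) ((0:ℕ):ℤ) = T n ((0:ℕ):ℤ) + _ + _
      rw [T_eq, T_eq, T_neg _ (by omega), T_neg _ (by omega), c_eq, c_eq]
      simp
    · show T (n+1) ((1:ℕ):ℤ) = T n ((1:ℕ):ℤ) + T n ((0:ℕ):ℤ) + _
      rw [T_eq, T_eq, T_eq, T_neg _ (by omega), c_eq, c_eq, c_eq]
      simp [Finset.sum_range_succ]
  · obtain ⟨m, hm⟩ : ∃ m : ℕ, i = (m:ℤ) + 2 := ⟨(i-2).toNat, by omega⟩
    subst hm
    have e1 : ((m:ℤ) + 2) = ((m+2 : ℕ) : ℤ) := by push_cast; ring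
    have e2 : ((m:ℤ) + 2 - 1) = ((m+1 : ℕ) : ℤ) := by push_cast; ring
    have e3 : ((m:ℤ) + 2 - 2) = ((m : ℕ) : ℤ) := by push_cast; ring
    rw [e2, e3, e1, T_eq, T_eq, T_eq, T_eq, pow_succ]
    nth_rewrite 2 [p]
    rw [mul_add, mul_add, Polynomial.coeff_add, Polynomial.coeff_add, mul_one]
    congr 1
    · congr 1
      exact Polynomial.coeff_mul_X _ (m+1)
    · exact Polynomial.coeff_mul_X_pow _ 2 m

lemma T_big' (n m : ℕ) (h : 2*n < m) : T n (m:ℤ) = 0 :=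
  T_big n (by exact_mod_cast h)

lemma fkey (a : ℕ → ℤ) (f : ℕ → ℕ → ℤ)
    (hf0 : ∀ k, f 0 k = a k)
    (hf : ∀ n k, 1 ≤ n → n ≤ k → f n k = f (n - 1) (k - 1) + f (n - 1) k + f (n - 1) (k + 1)) :
    ∀ n k, f n (k+n) = ∑ i ∈ Finset.range (2*n+1), (T n i : ℤ) * a (k+i) := by
  intro n
  induction n with
  | zero =>
    intro k
    have : T 0 ((0:ℕ):ℤ) = 1 := by rw [T_eq]; simp [p]
    simp only [Nat.add_zero, hf0]
    rw [Finset.sum_range_one]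
    push_cast at this ⊢
    rw [this]
    simp
  | succ n ih =>
    intro k
    have h1 : f (n+1) (k+(n+1)) = f n (k+n) + f n ((k+1)+n) + f n ((k+2)+n) := by
      rw [hf (n+1) (k+(n+1)) (by omega) (by omega)]
      have e1 : n+1-1 = n := rfl
      have e2 : k+(n+1)-1 = k+n := by omega
      have e3 : k+(n+1) = (k+1)+n := by omega
      have e4 : k+(n+1)+1 = (k+2)+n := by omega
      rw [e1, e2, e4, e3]
    have expand : ∑ i ∈ Finset.range (2*(n+1)+1), (T (n+1) i : ℤ) * a (k+i)
        = (∑ i ∈ Finset.range (2*n+3), (T n (i:ℤ) : ℤ) * a (k+i))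
        + (∑ i ∈ Finset.range (2*n+3), (T n ((i:ℤ)-1) : ℤ) * a (k+i))
        + (∑ i ∈ Finset.range (2*n+3), (T n ((i:ℤ)-2) : ℤ) * a (k+i)) := by
      rw [← Finset.sum_add_distrib, ← Finset.sum_add_distrib,
        show 2*(n+1)+1 = 2*n+3 from by ring]
      refine Finset.sum_congr rfl fun i _ => ?_
      rw [T_rec]
      push_cast
      ring
    have hA : (∑ i ∈ Finset.range (2*n+3), (T n (i:ℤ) : ℤ) * a (k+i))
        = ∑ i ∈ Finset.range (2*n+1), (T n (i:ℤ) : ℤ) * a (k+i) := by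
      rw [← Finset.sum_subset (Finset.range_subset_range.2 (by omega : 2*n+1 ≤ 2*n+3))
        (fun i hi hi2 => by
          simp only [Finset.mem_range] at hi hi2
          rw [T_big' n i (by omega)]
          simp)]
    have hB : (∑ i ∈ Finset.range (2*n+3), (T n ((i:ℤ)-1) : ℤ) * a (k+i))
        = ∑ i ∈ Finset.range (2*n+1), (T n (i:ℤ) : ℤ) * a ((k+1)+i) := by
      rw [Finset.sum_range_succ' _ (2*n+2)]
      have hz : T n (((0:ℕ):ℤ)-1) = 0 := T_neg n (by norm_num)
      rw [hz]
      rw [← Finset.sum_subset (Finset.range_subset_range.2 (by omega : 2*n+1 ≤ 2*n+2))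
        (fun i hi hi2 => by
          simp only [Finset.mem_range] at hi hi2
          have : ((i+1:ℕ):ℤ)-1 = ((i:ℕ):ℤ) := by push_cast; ring
          rw [this, T_big' n i (by omega)]
          simp)]
      simp only [Int.natCast_zero, CharP.cast_eq_zero, zero_mul, add_zero]
      refine Finset.sum_congr rfl fun i hi => ?_
      have h1 : ((i+1:ℕ):ℤ)-1 = ((i:ℕ):ℤ) := by push_cast; ring
      have h2 : k+(i+1) = (k+1)+i := by omega
      rw [h1, h2]
    have hC : (∑ i ∈ Finset.range (2*n+3), (T n ((i:ℤ)-2) : ℤ) * a (k+i))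
        = ∑ i ∈ Finset.range (2*n+1), (T n (i:ℤ) : ℤ) * a ((k+2)+i) := by
      rw [Finset.sum_range_succ' _ (2*n+2), Finset.sum_range_succ' _ (2*n+1)]
      have hz1 : T n (((0:ℕ):ℤ)-2) = 0 := T_neg n (by norm_num)
      have hz2 : T n (((0+1:ℕ):ℤ)-2) = 0 := T_neg n (by norm_num)
      rw [hz1, hz2]
      simp only [Int.natCast_zero, CharP.cast_eq_zero, zero_mul, add_zero]
      refine Finset.sum_congr rfl fun i hi => ?_
      have h1 : ((i+1+1:ℕ):ℤ)-2 = ((i:ℕ):ℤ) := by push_cast; ring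
      have h2 : k+(i+1+1) = (k+2)+i := by omega
      rw [h1, h2]
    rw [h1, ih k, ih (k+1), ih (k+2), expand, hA, hB, hC]
theorem triangle_column_sum (a : ℕ → ℤ) (f : ℕ → ℕ → ℤ)
    (hf0 : ∀ k, f 0 k = a k)
    (hf : ∀ n k, 1 ≤ n → n ≤ k → f n k = f (n - 1) (k - 1) + f (n - 1) k + f (n - 1) (k + 1))
    (n : ℕ) :
    ∑ i ∈ Finset.range (n + 1), f i n =
      ∑ l ∈ Finset.range (2 * n + 1), (S n l : ℤ) * a l := by
  have key := fkey a f hf0 hf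
  have step : ∀ i, i ≤ n → f i n =
      ∑ l ∈ Finset.range (2*n+1), (T i ((l:ℤ) - (n:ℤ) + (i:ℤ)) : ℤ) * a l := by
    intro i hi
    have hn : n = (n-i) + i := by omega
    rw [show f i n = f i ((n-i)+i) from by rw [← hn], key i (n-i)]
    have himg : ∑ j ∈ Finset.range (2*i+1), (T i (j:ℤ) : ℤ) * a ((n-i)+j)
        = ∑ l ∈ (Finset.range (2*i+1)).image (fun j => (n-i)+j),
            (T i ((l:ℤ) - (n:ℤ) + (i:ℤ)) : ℤ) * a l := by
      rw [Finset.sum_image (by intro x _ y _ h; simp only at h; omega)]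
      refine Finset.sum_congr rfl fun j hj => ?_
      have : (((n-i)+j : ℕ) : ℤ) - (n:ℤ) + (i:ℤ) = (j:ℤ) := by
        push_cast [hi]
        ring
      rw [this]
    rw [himg]
    refine Finset.sum_subset ?_ ?_
    · intro l hl
      simp only [Finset.mem_image, Finset.mem_range] at hl ⊢
      omega
    · intro l hl hl2
      simp only [Finset.mem_image, Finset.mem_range] at hl hl2
      push_neg at hl2
      rcases lt_or_ge l (n-i) with h | h
      · rw [T_neg i (by omega : (l:ℤ) - (n:ℤ) + (i:ℤ) < 0)]
        simp
      · have : n + i < l := by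
          by_contra hc
          exact absurd (hl2 (l - (n-i)) (by omega)) (by omega)
        rw [T_big i (by push_cast; omega : 2*(i:ℤ) < (l:ℤ) - (n:ℤ) + (i:ℤ))]
        simp
  calc ∑ i ∈ Finset.range (n + 1), f i n
      = ∑ i ∈ Finset.range (n+1), ∑ l ∈ Finset.range (2*n+1),
          (T i ((l:ℤ) - (n:ℤ) + (i:ℤ)) : ℤ) * a l := by
        refine Finset.sum_congr rfl fun i hi => ?_
        exact step i (by simp at hi; omega)
    _ = ∑ l ∈ Finset.range (2*n+1), ∑ i ∈ Finset.range (n+1),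
          (T i ((l:ℤ) - (n:ℤ) + (i:ℤ)) : ℤ) * a l := Finset.sum_comm
    _ = ∑ l ∈ Finset.range (2 * n + 1), (S n l : ℤ) * a l := by
        refine Finset.sum_congr rfl fun l _ => ?_
        rw [← Finset.sum_mul]
        congr 1
        rw [S, Nat.cast_sum, ← Finset.sum_range_reflect]
        refine Finset.sum_congr rfl fun i hi => ?_
        simp only [Finset.mem_range] at hi
        have ha : n + 1 - 1 - i = n - i := by omega
        have hb : (l:ℤ) - (n:ℤ) + ((n-i:ℕ):ℤ) = (l:ℤ) - (i:ℤ) := by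
          push_cast [Nat.cast_sub (by omega : i ≤ n)]
          ring
        rw [ha, hb]
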